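/- Let G = (V, E) be a finite DAG with width w. Then the number of non-transitive edges of G is at most w·|V|, i.e., |E_red| = |E| − |E_tr| ≤ w·|V|, where E_tr is the set of transitive edges of G and E_red = E − E_tr. -/
import Mathlib


variable {V : Type*}

/-- An edge `(v, t)` is transitive if there is a vertex `w` with an edge `(v, w)`
and `t` strictly reachable from `w`. -/
def IsTransEdge (E : V → V → Prop) (v t : V) : Prop :=
  E v t ∧ ∃ w, E v w ∧ Relation.TransGen E w t

/-- An antichain: a finite set of pairwise mutually unreachable vertices. -/
def IsAntichainSet (E : V → V → Prop) (A : Finset V) : Prop :=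
  ∀ u ∈ A, ∀ u' ∈ A, u ≠ u' →
    ¬ Relation.ReflTransGen E u u' ∧ ¬ Relation.ReflTransGen E u' u

/-- `w` is the width of the DAG: the maximum cardinality of an antichain. -/
def IsWidth (E : V → V → Prop) (w : ℕ) : Prop :=
  (∃ A : Finset V, IsAntichainSet E A ∧ A.card = w) ∧
    ∀ A : Finset V, IsAntichainSet E A → A.card ≤ w

theorem nontransitive_edges_le_width_mul_card [Fintype V] (E : V → V → Prop)
    (hdag : ∀ v : V, ¬ Relation.TransGen E v v)
    (w : ℕ) (hw : IsWidth E w) :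
    ({p : V × V | E p.1 p.2} \ {p : V × V | IsTransEdge E p.1 p.2}).ncard
      ≤ w * Fintype.card V := by
  classical
  set S : Finset (V × V) :=
    Finset.univ.filter (fun p => E p.1 p.2 ∧ ¬ IsTransEdge E p.1 p.2) with hSdef
  have hS : ({p : V × V | E p.1 p.2} \ {p : V × V | IsTransEdge E p.1 p.2}).ncard
      = S.card := by
    rw [Set.ncard_eq_toFinset_card']
    congr 1
    ext p
    simp [hSdef, Set.mem_diff]
  rw [hS]
  have hfib := Finset.card_eq_sum_card_fiberwise
    (f := fun p : V × V => p.1) (s := S) (t := Finset.univ)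
    (fun p _ => Finset.mem_univ _)
  rw [hfib]
  have hbound : ∀ v : V, (S.filter (fun p => p.1 = v)).card ≤ w := by
    intro v
    set A : Finset V := (S.filter (fun p => p.1 = v)).image Prod.snd with hAdef
    have hcard : (S.filter (fun p => p.1 = v)).card = A.card := by
      rw [hAdef]
      rw [Finset.card_image_of_injOn]
      intro p hp q hq hpq
      simp only [Finset.mem_coe, Finset.mem_filter] at hp hq
      exact Prod.ext (hp.2.trans hq.2.symm) hpq
    rw [hcard]
    apply hw.2
    intro u hu u' hu' hne
    rw [hAdef] at hu hu'
    obtain ⟨p, hp, hp2⟩ := Finset.mem_image.mp hu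
    obtain ⟨q, hq, hq2⟩ := Finset.mem_image.mp hu'
    simp only [Finset.mem_filter, hSdef, Finset.mem_univ, true_and] at hp hq
    obtain ⟨⟨hEp, hTp⟩, hp1⟩ := hp
    obtain ⟨⟨hEq, hTq⟩, hq1⟩ := hq
    subst hp2; subst hq2
    rw [hp1] at hEp hTp
    rw [hq1] at hEq hTq
    have key : ∀ a b : V, E v a → E v b → ¬ IsTransEdge E v b → a ≠ b →
        ¬ Relation.ReflTransGen E a b := by
      intro a b hEa hEb hTb hab hr
      rcases (Relation.reflTransGen_iff_eq_or_transGen.mp hr) with h | h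
      · exact hab h.symm
      · exact hTb ⟨hEb, a, hEa, h⟩
    constructor
    · exact key p.2 q.2 hEp hEq hTq hne
    · exact key q.2 p.2 hEq hEp hTp hne.symm
  calc ∑ v : V, (S.filter (fun p => p.1 = v)).card ≤ ∑ _v : V, w :=
        Finset.sum_le_sum (fun v _ => hbound v)
    _ = w * Fintype.card V := by
        rw [Finset.sum_const, Finset.card_univ, smul_eq_mul, Nat.mul_comm]
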